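/- Let d be an integer with |d| ≥ 2, let A = (ℝ/ℤ) × (0,1) be the open annulus with universal covering p : ℝ × (0,1) → A, and let f : A → A be a continuous map of degree d with lift F. Suppose that for every k ∈ ℤ the lift F + k (defined by v ↦ F(v) + (k,0)) has a fixed point. Then f has at least |d − 1| fixed points: there exist |d − 1| pairwise distinct points a ∈ A with f(a) = a. -/

import Mathlib

noncomputable section

/-- The open annulus `A = (ℝ/ℤ) × (0,1)`. -/
abbrev OpenAnnulus := AddCircle (1 : ℝ) × Set.Ioo (0 : ℝ) 1

/-- The universal cover `ℝ × (0,1)` of the open annulus. -/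
abbrev Strip := ℝ × Set.Ioo (0 : ℝ) 1

/-- The universal covering projection `p : ℝ × (0,1) → A`. -/
def annulusProj : Strip → OpenAnnulus := fun v => ((v.1 : AddCircle (1 : ℝ)), v.2)

/-- The deck transformation `v ↦ v + (1,0)` of the strip. -/
def shift (v : Strip) : Strip := (v.1 + 1, v.2)

/-- Horizontal translation `v ↦ v + (k,0)` of the strip. -/
def htrans (k : ℝ) (v : Strip) : Strip := (v.1 + k, v.2)


lemma htrans_fst (k : ℝ) (v : Strip) : (htrans k v).1 = v.1 + k := rfl
lemma htrans_snd (k : ℝ) (v : Strip) : (htrans k v).2 = v.2 := rfl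

lemma strip_ext {x y : Strip} (h1 : x.1 = y.1) (h2 : x.2 = y.2) : x = y :=
  Prod.ext h1 h2

lemma proj_htrans (k : ℤ) (w : Strip) : annulusProj (htrans (k : ℝ) w) = annulusProj w := by
  refine Prod.ext ?_ rfl
  show ((w.1 + (k:ℝ) : ℝ) : AddCircle (1:ℝ)) = (w.1 : AddCircle (1:ℝ))
  rw [← sub_eq_zero, ← AddCircle.coe_sub, AddCircle.coe_eq_zero_iff]
  exact ⟨k, by simp⟩

lemma proj_eq_iff {v w : Strip} (h : annulusProj v = annulusProj w) :
    ∃ n : ℤ, w = htrans (n : ℝ) v := by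
  have h1 : ((v.1 : ℝ) : AddCircle (1:ℝ)) = (w.1 : AddCircle (1:ℝ)) := (Prod.ext_iff.mp h).1
  have h2 : v.2 = w.2 := (Prod.ext_iff.mp h).2
  rw [← sub_eq_zero, ← AddCircle.coe_sub, AddCircle.coe_eq_zero_iff] at h1
  obtain ⟨n, hn⟩ := h1
  refine ⟨-n, strip_ext ?_ h2.symm⟩
  simp only [htrans_fst]
  have : (n : ℝ) * 1 = v.1 - w.1 := by simpa using hn
  push_cast
  linarith

/-- if `f : A → A` has degree `d` (`|d| ≥ 2`) and every lift
`F + k` (`k ∈ ℤ`) has a fixed point, then `f` has at least `|d − 1|` fixed points. -/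
theorem nielsen_count_fixed_points (d : ℤ) (hd : 2 ≤ |d|)
    (f : OpenAnnulus → OpenAnnulus) (hf : Continuous f)
    (F : Strip → Strip) (hFcont : Continuous F)
    (hlift : ∀ v : Strip, annulusProj (F v) = f (annulusProj v))
    (hdeg : ∀ v : Strip, F (shift v) = htrans d (F v))
    (hfix : ∀ k : ℤ, ∃ v : Strip, htrans k (F v) = v) :
    ∃ S : Finset OpenAnnulus, (d - 1).natAbs ≤ S.card ∧ ∀ a ∈ S, f a = a := by
  classical
  set m := (d - 1).natAbs with hm
  choose V hV using hfix
  have key : ∀ (v : Strip) (n : ℤ), F (htrans (n : ℝ) v) = htrans ((d * n : ℤ) : ℝ) (F v) := by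
    intro v n
    induction n using Int.induction_on with
    | zero =>
        have h0 : htrans ((0:ℤ):ℝ) v = v := strip_ext (by simp [htrans_fst]) rfl
        rw [h0]
        refine strip_ext ?_ rfl
        simp [htrans_fst]
    | succ n ih =>
        have h1 : htrans (((n:ℤ)+1 : ℤ) : ℝ) v = shift (htrans ((n:ℤ) : ℝ) v) := by
          refine strip_ext ?_ rfl
          simp [htrans_fst, shift]
          push_cast; ring
        rw [h1, hdeg, ih]
        refine strip_ext ?_ rfl
        simp [htrans_fst]
        push_cast; ring
    | pred n ih =>
        have h1 : shift (htrans ((-(n:ℤ) - 1 : ℤ) : ℝ) v) = htrans ((-(n:ℤ) : ℤ) : ℝ) v := by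
          refine strip_ext ?_ rfl
          simp [htrans_fst, shift]
          push_cast; ring
        have h2 := hdeg (htrans ((-(n:ℤ) - 1 : ℤ) : ℝ) v)
        rw [h1, ih] at h2
        -- h2 : htrans (d * -n) (F v) = htrans d (F (htrans (-(n+1)) v))
        have inj : ∀ (a : ℝ) (x y : Strip), htrans a x = htrans a y → x = y := by
          intro a x y h
          have e1 : x.1 + a = y.1 + a := congrArg Prod.fst h
          exact strip_ext (by linarith) (Prod.ext_iff.mp h).2
        apply inj (d : ℝ)
        rw [← h2]
        refine strip_ext ?_ rfl
        simp [htrans_fst]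
        push_cast; ring
  have hinj : Set.InjOn (fun k : ℕ => annulusProj (V (k : ℤ))) ↑(Finset.range m) := by
    intro k hk k' hk' heq
    simp only [] at heq
    simp only [Finset.coe_range, Set.mem_Iio] at hk hk'
    obtain ⟨n, hn⟩ := proj_eq_iff heq
    -- V k' = htrans n (V k)
    have hFk := congrArg Prod.fst (hV k)
    have hFk' := congrArg Prod.fst (hV k')
    simp only [htrans_fst] at hFk hFk'
    have hFe : F (V k') = htrans ((d * n : ℤ) : ℝ) (F (V k)) := by
      rw [hn]; exact key _ n
    have hFe1 : (F (V (k':ℤ))).1 = (F (V (k:ℤ))).1 + ((d * n : ℤ) : ℝ) := by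
      rw [hFe]; rfl
    have hn1 : (V (k':ℤ)).1 = (V (k:ℤ)).1 + (n : ℝ) := by rw [hn]; rfl
    -- Combine
    have hreal : ((k:ℤ) : ℝ) - ((k':ℤ) : ℝ) = (((d - 1) * n : ℤ) : ℝ) := by
      push_cast at hFe1 hn1 hFk hFk' ⊢
      linarith
    have hint : (k : ℤ) - (k' : ℤ) = (d - 1) * n := by exact_mod_cast hreal
    have hnz : n = 0 := by
      by_contra hne
      have h1 : (m : ℤ) ≤ |(d - 1) * n| := by
        rw [abs_mul]
        have : (1 : ℤ) ≤ |n| := Int.one_le_abs (by omega)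
        have hm' : (m : ℤ) = |d - 1| := Int.abs_eq_natAbs (d-1) ▸ rfl
        nlinarith [abs_nonneg (d-1), abs_nonneg n, hm' ▸ le_refl (m:ℤ)]
      rw [← hint] at h1
      have : |(k : ℤ) - (k' : ℤ)| < m := by
        rw [abs_sub_lt_iff]; omega
      omega
    rw [hnz, mul_zero] at hint
    omega
  refine ⟨(Finset.range m).image (fun k : ℕ => annulusProj (V (k : ℤ))), ?_, ?_⟩
  · rw [Finset.card_image_of_injOn hinj, Finset.card_range]
  · intro a ha
    simp only [Finset.mem_image, Finset.mem_range] at ha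
    obtain ⟨k, _, rfl⟩ := ha
    rw [← hlift, ← proj_htrans k (F (V k)), hV k]

end
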